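/- Let I be a countable family of nondegenerate closed intervals in ℝ and define x ~ y as: for every ε > 0 there is a finite ε-chain of intervals from I connecting x to y (each consecutive separation at most ε). Then every equivalence class of ~ is a convex subset of ℝ (i.e., an interval, possibly degenerate). -/

import Mathlib

/-- The separation distance between two subsets of `ℝ`. -/
noncomputable def sep (A B : Set ℝ) : ℝ :=
  sInf {d : ℝ | ∃ a ∈ A, ∃ b ∈ B, d = |a - b|}

/-- A nondegenerate closed interval (possibly a half-line or all of `ℝ`). -/
def IsNondegClosedInterval (J : Set ℝ) : Prop :=
  IsClosed J ∧ J.OrdConnected ∧ ∃ a ∈ J, ∃ b ∈ J, a < b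

/-- `x` and `y` are related iff for every `ε > 0` there is a finite `ε`-chain of
intervals from `I` connecting `x` to `y`. -/
def chainRel (I : Set (Set ℝ)) (x y : ℝ) : Prop :=
  ∀ ε > (0 : ℝ), ∃ L : List (Set ℝ), (∀ J ∈ L, J ∈ I) ∧
    List.Chain' (fun A B => sep A B ≤ ε) ({x} :: (L ++ [{y}]))

lemma sep_bddBelow (A B : Set ℝ) :
    BddBelow {d : ℝ | ∃ a ∈ A, ∃ b ∈ B, d = |a - b|} := by
  refine ⟨0, ?_⟩
  rintro d ⟨a, -, b, -, rfl⟩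
  positivity

lemma sep_le {A B : Set ℝ} {a b : ℝ} (ha : a ∈ A) (hb : b ∈ B) :
    sep A B ≤ |a - b| :=
  csInf_le (sep_bddBelow A B) ⟨a, ha, b, hb, rfl⟩

lemma sep_comm (A B : Set ℝ) : sep A B = sep B A := by
  unfold sep
  congr 1
  ext d
  constructor <;> rintro ⟨a, ha, b, hb, rfl⟩ <;>
    exact ⟨b, hb, a, ha, (abs_sub_comm _ _)⟩

lemma sep_singleton (x y : ℝ) : sep {x} {y} = |x - y| := by
  unfold sep
  have h : {d : ℝ | ∃ a ∈ ({x} : Set ℝ), ∃ b ∈ ({y} : Set ℝ), d = |a - b|}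
      = {|x - y|} := by
    ext d
    simp [eq_comm]
  rw [h, csInf_singleton]

lemma sep_tri {A : Set ℝ} (hA : A.Nonempty) (y w : ℝ) :
    sep A {w} ≤ sep A {y} + |y - w| := by
  obtain ⟨a₀, ha₀⟩ := hA
  rw [← sub_le_iff_le_add]
  have hne : {d : ℝ | ∃ a ∈ A, ∃ b ∈ ({y} : Set ℝ), d = |a - b|}.Nonempty :=
    ⟨|a₀ - y|, a₀, ha₀, y, rfl, rfl⟩
  apply le_csInf hne
  rintro d ⟨a, ha, b, hb, rfl⟩
  rcases hb with rfl
  have h1 : sep A {w} ≤ |a - w| := sep_le ha rfl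
  have h2 : |a - w| ≤ |a - b| + |b - w| := abs_sub_le a b w
  linarith

lemma sep_straddle {A B : Set ℝ} {w δ : ℝ} (hA : A.Nonempty) (hB : B.Nonempty)
    (hAw : ∀ a ∈ A, a < w) (hBw : ∀ b ∈ B, w < b) (h : sep A B ≤ δ) :
    sep A {w} ≤ δ := by
  refine le_trans ?_ h
  obtain ⟨a₀, ha₀⟩ := hA
  obtain ⟨b₀, hb₀⟩ := hB
  have hne : {d : ℝ | ∃ a ∈ A, ∃ b ∈ B, d = |a - b|}.Nonempty :=
    ⟨|a₀ - b₀|, a₀, ha₀, b₀, hb₀, rfl⟩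
  apply le_csInf hne
  rintro d ⟨a, ha, b, hb, rfl⟩
  have h1 : sep A {w} ≤ |a - w| := sep_le ha rfl
  have h2 : a < w := hAw a ha
  have h3 : w < b := hBw b hb
  rw [abs_of_neg (by linarith)] at h1
  rw [abs_of_neg (by linarith)]
  linarith

/-- Straddle lemma: in a chain of nonempty ord-connected sets whose first set has a
point `≤ w` and whose last set has a point `≥ w`, some set is within `δ` of `w`. -/
lemma straddle {δ : ℝ} (hδ : 0 ≤ δ) (w : ℝ) :
    ∀ (M : List (Set ℝ)), M ≠ [] →
      (∀ S ∈ M, S.Nonempty ∧ S.OrdConnected) →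
      List.Chain' (fun A B => sep A B ≤ δ) M →
      (∀ A, M.head? = some A → ∃ a ∈ A, a ≤ w) →
      (∀ Z, M.getLast? = some Z → ∃ b ∈ Z, w ≤ b) →
      ∃ S ∈ M, sep S {w} ≤ δ := by
  intro M
  induction M with
  | nil => intro h; exact absurd rfl h
  | cons A rest ih =>
    intro _ hne hch hhead hlast
    obtain ⟨a, ha, haw⟩ := hhead A rfl
    by_cases hup : ∃ b ∈ A, w ≤ b
    · obtain ⟨b, hb, hwb⟩ := hup
      have hwA : w ∈ A := (hne A (by simp)).2.out ha hb ⟨haw, hwb⟩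
      refine ⟨A, by simp, ?_⟩
      have h0 : sep A {w} ≤ |w - w| := sep_le hwA rfl
      rw [sub_self, abs_zero] at h0
      exact h0.trans hδ
    · push_neg at hup
      match rest with
      | [] =>
        obtain ⟨b, hb, hwb⟩ := hlast A (by simp)
        exact absurd hwb (not_le.mpr (hup b hb))
      | B :: rest' =>
        by_cases hB : ∃ a' ∈ B, a' ≤ w
        · obtain ⟨S, hS, hsep⟩ := ih (List.cons_ne_nil _ _) (fun S hS => hne S (by simp [hS]))
            hch.tail (by rintro C hC; rw [List.head?_cons, Option.some_inj] at hC
                         exact hC ▸ hB)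
            (fun Z hZ => hlast Z (by rw [List.getLast?_cons_cons]; exact hZ))
          exact ⟨S, by simp [hS], hsep⟩
        · push_neg at hB
          refine ⟨A, by simp, ?_⟩
          have hAB : sep A B ≤ δ := (List.isChain_cons_cons.mp hch).1
          exact sep_straddle ⟨a, ha⟩ (hne B (by simp)).1 hup
            (fun b hb => not_le.mp (by exact fun h => absurd h (not_le.mpr (hB b hb)))) hAB

/-- Modify the endpoint of a chain. -/
lemma chain_tail_mod {δ : ℝ} {T : List (Set ℝ)} {y w : ℝ}
    (hch : List.Chain' (fun A B => sep A B ≤ δ) (T ++ [{y}]))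
    (hne : ∀ S ∈ T, S.Nonempty) (hyw : |y - w| ≤ δ) :
    List.Chain' (fun A B => sep A B ≤ δ + δ) (T ++ [{w}]) := by
  have hδ : 0 ≤ δ := le_trans (abs_nonneg _) hyw
  simp only [List.Chain'] at hch ⊢
  rw [List.isChain_append] at hch ⊢
  obtain ⟨h1, -, h3⟩ := hch
  refine ⟨h1.imp (fun a b h => by linarith), List.isChain_singleton _, ?_⟩
  intro a ha b hb
  simp only [List.head?_cons, Option.mem_def, Option.some.injEq] at hb
  subst hb
  have haT : a ∈ T := List.mem_of_mem_getLast? ha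
  have h4 : sep a {y} ≤ δ := h3 a ha {y} (by simp)
  calc sep a {w} ≤ sep a {y} + |y - w| := sep_tri (hne a haT) y w
    _ ≤ δ + δ := add_le_add h4 hyw

/-- Truncate a chain at a set close to `w`. -/
lemma chain_truncate {I : Set (Set ℝ)} {x u w ε : ℝ} (hε : 0 < ε)
    {L : List (Set ℝ)} {S : Set ℝ} (hLI : ∀ J ∈ L, J ∈ I) (hS : S ∈ L)
    (hch : List.Chain' (fun A B => sep A B ≤ ε / 2) ({x} :: (L ++ [{u}])))
    (hsep : sep S {w} ≤ ε / 2) :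
    ∃ L' : List (Set ℝ), (∀ J ∈ L', J ∈ I) ∧
      List.Chain' (fun A B => sep A B ≤ ε) ({x} :: (L' ++ [{w}])) := by
  obtain ⟨T1, T2, rfl⟩ := List.append_of_mem hS
  refine ⟨T1 ++ [S], fun J hJ => hLI J (by
    rcases List.mem_append.mp hJ with h | h
    · exact List.mem_append.mpr (Or.inl h)
    · simp at h; subst h; simp), ?_⟩
  have heq : ({x} : Set ℝ) :: ((T1 ++ S :: T2) ++ [{u}])
      = (({x} : Set ℝ) :: (T1 ++ [S])) ++ (T2 ++ [{u}]) := by simp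
  rw [heq] at hch
  have hpre := (List.isChain_append.mp hch).1
  have hsh : ({x} : Set ℝ) :: ((T1 ++ [S]) ++ [{w}])
      = ((({x} : Set ℝ) :: (T1 ++ [S])) ++ [{w}]) := by simp
  rw [hsh]
  simp only [List.Chain']
  rw [List.isChain_append]
  refine ⟨hpre.imp (fun a b h => by linarith), List.isChain_singleton _, ?_⟩
  intro a ha b hb
  simp only [List.head?_cons, Option.mem_def, Option.some.injEq] at hb
  subst hb
  rw [show (({x} : Set ℝ) :: (T1 ++ [S])) = (({x} : Set ℝ) :: T1) ++ [S] by simp,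
    List.getLast?_concat, Option.mem_def, Option.some.injEq] at ha
  subst ha
  linarith

/-- Every equivalence class of the chain relation is a convex subset of `ℝ`. -/
theorem stmt_4 (I : Set (Set ℝ)) (hcount : I.Countable)
    (hI : ∀ J ∈ I, IsNondegClosedInterval J) :
    ∀ x : ℝ, Convex ℝ {y : ℝ | chainRel I x y} := by
  intro x
  rw [convex_iff_ordConnected]
  constructor
  intro y hy z hz w hw
  intro ε hε
  obtain ⟨L1, hL1I, hch1⟩ := hy (ε / 2) (by linarith)
  obtain ⟨L2, hL2I, hch2⟩ := hz (ε / 2) (by linarith)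
  set R : Set ℝ → Set ℝ → Prop := fun A B => sep A B ≤ ε / 2 with hR
  -- reverse the first chain
  have hch1' : List.Chain' R (({y} : Set ℝ) :: (L1.reverse ++ [{x}])) := by
    have hflip : List.Chain' (flip R) (({x} : Set ℝ) :: (L1 ++ [{y}])) :=
      hch1.imp (fun a b h => by simpa [flip, hR, sep_comm] using h)
    have := List.isChain_reverse.mpr hflip
    simpa [List.Chain', flip] using this
  -- splice
  set M : List (Set ℝ) := (({y} : Set ℝ) :: (L1.reverse ++ [{x}])) ++ (L2 ++ [{z}]) with hM
  have hchM : List.Chain' R M := by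
    rw [hM]
    simp only [List.Chain']
    rw [List.isChain_append]
    refine ⟨hch1', (List.isChain_cons.mp hch2).2, ?_⟩
    intro a ha b hb
    have hlasteq : ((({y} : Set ℝ) :: (L1.reverse ++ [{x}]))).getLast? = some {x} := by
      rw [show (({y} : Set ℝ) :: (L1.reverse ++ [{x}])) = (({y} : Set ℝ) :: L1.reverse) ++ [{x}]
        by simp]
      exact List.getLast?_concat
    rw [hlasteq, Option.mem_def, Option.some.injEq] at ha
    subst ha
    exact (List.isChain_cons.mp hch2).1 b hb
  -- elements of M are nonempty ord-connected
  have hMel : ∀ S ∈ M, S.Nonempty ∧ S.OrdConnected := by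
    intro S hS
    have : S = {y} ∨ S ∈ L1 ∨ S = {x} ∨ S ∈ L2 ∨ S = {z} := by
      simp only [hM, List.mem_append, List.mem_cons, List.mem_reverse,
        List.mem_singleton] at hS
      tauto
    rcases this with rfl | h | rfl | h | rfl
    · exact ⟨Set.singleton_nonempty _, Set.ordConnected_singleton⟩
    · obtain ⟨-, hoc, a, haJ, -⟩ := hI S (hL1I S h); exact ⟨⟨a, haJ⟩, hoc⟩
    · exact ⟨Set.singleton_nonempty _, Set.ordConnected_singleton⟩
    · obtain ⟨-, hoc, a, haJ, -⟩ := hI S (hL2I S h); exact ⟨⟨a, haJ⟩, hoc⟩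
    · exact ⟨Set.singleton_nonempty _, Set.ordConnected_singleton⟩
  -- find the straddling set
  obtain ⟨S, hSM, hSsep⟩ := straddle (by linarith : (0:ℝ) ≤ ε / 2) w M (by simp [hM]) hMel hchM
    (by intro A hA
        rw [hM, List.cons_append, List.head?_cons, Option.some_inj] at hA
        exact hA ▸ ⟨y, rfl, hw.1⟩)
    (by intro Z hZ
        have : M.getLast? = some {z} := by
          rw [show M = ((({y} : Set ℝ) :: (L1.reverse ++ [{x}])) ++ L2) ++ [{z}] by simp [hM]]
          exact List.getLast?_concat
        rw [this, Option.some_inj] at hZ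
        exact hZ ▸ ⟨z, rfl, hw.2⟩)
  have hScases : S = {y} ∨ S ∈ L1 ∨ S = {x} ∨ S ∈ L2 ∨ S = {z} := by
    simp only [hM, List.mem_append, List.mem_cons, List.mem_reverse,
      List.mem_singleton] at hSM
    tauto
  have hne1 : ∀ T ∈ (({x} : Set ℝ) :: L1), T.Nonempty := by
    intro T hT
    rcases List.mem_cons.mp hT with rfl | h
    · exact Set.singleton_nonempty _
    · obtain ⟨-, -, a, haJ, -⟩ := hI T (hL1I T h); exact ⟨a, haJ⟩
  have hne2 : ∀ T ∈ (({x} : Set ℝ) :: L2), T.Nonempty := by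
    intro T hT
    rcases List.mem_cons.mp hT with rfl | h
    · exact Set.singleton_nonempty _
    · obtain ⟨-, -, a, haJ, -⟩ := hI T (hL2I T h); exact ⟨a, haJ⟩
  rcases hScases with rfl | h | rfl | h | rfl
  · -- S = {y}
    rw [sep_singleton] at hSsep
    refine ⟨L1, hL1I, ?_⟩
    have := chain_tail_mod (T := ({x} : Set ℝ) :: L1) (y := y) (w := w)
      (by simpa using hch1) hne1 hSsep
    have h2 : List.Chain' (fun A B => sep A B ≤ ε) ((({x} : Set ℝ) :: L1) ++ [{w}]) :=
      this.imp (fun a b h => by linarith)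
    simpa using h2
  · exact chain_truncate hε hL1I h hch1 hSsep
  · -- S = {x}
    refine ⟨[], by simp, ?_⟩
    simp only [List.nil_append]
    simp only [List.Chain']
    rw [List.isChain_cons_cons]
    exact ⟨by linarith, List.isChain_singleton _⟩
  · exact chain_truncate hε hL2I h hch2 hSsep
  · -- S = {z}
    rw [sep_singleton] at hSsep
    refine ⟨L2, hL2I, ?_⟩
    have := chain_tail_mod (T := ({x} : Set ℝ) :: L2) (y := z) (w := w)
      (by simpa using hch2) hne2 hSsep
    have h2 : List.Chain' (fun A B => sep A B ≤ ε) ((({x} : Set ℝ) :: L2) ++ [{w}]) :=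
      this.imp (fun a b h => by linarith)
    simpa using h2
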